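/- Let k, k₀, b, ρ₁, ρ₂, l > 0 with l ≠ mπ for all m ∈ ℤ. Suppose ψ, w ∈ H²(0,1) with zero mean and ψ'(0) = ψ'(1) = w'(0) = w'(1) = 0, λ ∈ ℝ \ {0}, satisfy: kψ' + l(k+k₀)w' = 0 on (0,1), bψ'' − k(ψ + lw) = −ρ₂λ²ψ, and k₀w'' − lk(ψ + lw) = −ρ₁λ²w. Then ψ = −l(1 + k₀/k)·w, and w satisfies w'' + α²λ²w = 0 where α² = (ρ₂l²(k+k₀) + kρ₁)/(bl²(k+k₀) + kk₀). -/

import Mathlib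

open Real MeasureTheory intervalIntegral

/-- Reduction of the residual eigenvalue problem for `(ψ, w)` to a single
harmonic oscillator equation. -/
theorem bresse_eigen_reduction
    (k k₀ b ρ₁ ρ₂ l : ℝ)
    (hk : 0 < k) (hk₀ : 0 < k₀) (hb : 0 < b) (hρ₁ : 0 < ρ₁) (hρ₂ : 0 < ρ₂) (hl : 0 < l)
    (hlπ : ∀ m : ℤ, l ≠ m * Real.pi)
    (ψ w : ℝ → ℝ) (hψ : ContDiff ℝ 2 ψ) (hw : ContDiff ℝ 2 w)
    (hψm : ∫ x in (0:ℝ)..1, ψ x = 0)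
    (hwm : ∫ x in (0:ℝ)..1, w x = 0)
    (hbψ0 : deriv ψ 0 = 0) (hbψ1 : deriv ψ 1 = 0)
    (hbw0 : deriv w 0 = 0) (hbw1 : deriv w 1 = 0)
    (lam : ℝ) (hlam : lam ≠ 0)
    (heq1 : ∀ x ∈ Set.Ioo (0:ℝ) 1, k * deriv ψ x + l * (k + k₀) * deriv w x = 0)
    (heq2 : ∀ x ∈ Set.Ioo (0:ℝ) 1,
      b * deriv (deriv ψ) x - k * (ψ x + l * w x) = -ρ₂ * lam^2 * ψ x)
    (heq3 : ∀ x ∈ Set.Ioo (0:ℝ) 1,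
      k₀ * deriv (deriv w) x - l * k * (ψ x + l * w x) = -ρ₁ * lam^2 * w x) :
    (∀ x ∈ Set.Icc (0:ℝ) 1, ψ x = -l * (1 + k₀ / k) * w x) ∧
    (∀ x ∈ Set.Ioo (0:ℝ) 1,
      deriv (deriv w) x +
        ((ρ₂ * l^2 * (k + k₀) + k * ρ₁) / (b * l^2 * (k + k₀) + k * k₀)) * lam^2 * w x = 0) := by
  have hk' : k ≠ 0 := ne_of_gt hk
  have hψd : Differentiable ℝ ψ := hψ.differentiable (by norm_num)
  have hwd : Differentiable ℝ w := hw.differentiable (by norm_num)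
  have hψ2 : ContDiff ℝ (1+1 : ℕ) ψ := by exact_mod_cast hψ
  have hw2 : ContDiff ℝ (1+1 : ℕ) w := by exact_mod_cast hw
  have hψd2 : Differentiable ℝ (deriv ψ) :=
    ((contDiff_succ_iff_deriv (n := 1)).mp (by exact_mod_cast hψ2)).2.2.differentiable one_ne_zero
  have hwd2 : Differentiable ℝ (deriv w) :=
    ((contDiff_succ_iff_deriv (n := 1)).mp (by exact_mod_cast hw2)).2.2.differentiable one_ne_zero
  set g : ℝ → ℝ := fun x => k * ψ x + l * (k + k₀) * w x with hgdef
  have hgd : ∀ x : ℝ, HasDerivAt g (k * deriv ψ x + l * (k + k₀) * deriv w x) x := fun x =>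
    ((hψd x).hasDerivAt.const_mul k).add ((hwd x).hasDerivAt.const_mul (l * (k + k₀)))
  have hgc : ∀ x ∈ Set.Icc (0:ℝ) 1, g x = g 0 := by
    apply constant_of_has_deriv_right_zero
    · exact (((continuous_const.mul hψ.continuous).add (continuous_const.mul hw.continuous)).continuousOn)
    · intro x hx
      have h0 : k * deriv ψ x + l * (k + k₀) * deriv w x = 0 := by
        rcases eq_or_lt_of_le hx.1 with h | h
        · rw [← h, hbψ0, hbw0]; ring
        · exact heq1 x ⟨h, hx.2⟩
      exact (h0 ▸ hgd x).hasDerivWithinAt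
  -- integral of g is zero
  have hψi : IntervalIntegrable ψ volume 0 1 := (hψ.continuous).intervalIntegrable 0 1
  have hwi : IntervalIntegrable w volume 0 1 := (hw.continuous).intervalIntegrable 0 1
  have hgint : (∫ x in (0:ℝ)..1, g x) = g 0 := by
    have : ∫ x in (0:ℝ)..1, g x = ∫ _x in (0:ℝ)..1, g 0 := by
      apply intervalIntegral.integral_congr
      intro x hx
      rw [Set.uIcc_of_le (by norm_num)] at hx
      exact hgc x hx
    rw [this]; simp
  have hg0 : g 0 = 0 := by
    rw [← hgint, hgdef]
    simp only []
    rw [intervalIntegral.integral_add (hψi.const_mul k) (hwi.const_mul (l * (k + k₀))),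
      intervalIntegral.integral_const_mul, intervalIntegral.integral_const_mul, hψm, hwm]
    ring
  have hmain : ∀ x ∈ Set.Icc (0:ℝ) 1, ψ x = -l * (1 + k₀ / k) * w x := by
    intro x hx
    have := (hgc x hx).trans hg0
    simp only [hgdef] at this
    field_simp
    linarith [this]
  refine ⟨hmain, ?_⟩
  intro x hx
  have hxI : x ∈ Set.Icc (0:ℝ) 1 := Set.mem_Icc.mpr ⟨le_of_lt hx.1, le_of_lt hx.2⟩
  have hψx : ψ x = -l * (1 + k₀ / k) * w x := hmain x hxI
  -- second derivative relation
  have hder : deriv (deriv ψ) x = -(l * (k + k₀) / k) * deriv (deriv w) x := by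
    have hEq : deriv ψ =ᶠ[nhds x] fun y => -(l * (k + k₀) / k) * deriv w y := by
      filter_upwards [isOpen_Ioo.mem_nhds hx] with y hy
      have := heq1 y hy
      field_simp
      linarith [this]
    rw [hEq.deriv_eq, deriv_const_mul _ (hwd2 x)]
  have e2 := heq2 x hx
  have e3 := heq3 x hx
  rw [hψx, hder] at e2
  rw [hψx] at e3
  have hD : b * l^2 * (k + k₀) + k * k₀ ≠ 0 := by positivity
  field_simp at e2 e3 ⊢
  linear_combination (-l^2) * e2 + k * e3
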